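/- For every modal rule θ ∈ {λ, J} and all modal trees T, S: if T rewrites to S by one θ-step followed by one π⁺-step, then T rewrites to S by finitely many (possibly zero) π⁺-steps, followed by finitely many (possibly zero) θ-steps, followed by finitely many (possibly zero) σ-steps. -/

import Mathlib

namespace TRC

/-- Strictly positive formulas of `L⁺`. -/
inductive SPF : Type where
  | top : SPF
  | var : ℕ → SPF
  | dia : ℕ → SPF → SPF
  | and : SPF → SPF → SPF

/-- The sequent system `K⁺`. -/
inductive KPlus : SPF → SPF → Prop where
  | id (φ) : KPlus φ φ
  | topI (φ) : KPlus φ .top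
  | cut {φ ψ χ} : KPlus φ ψ → KPlus ψ χ → KPlus φ χ
  | andE₁ (φ ψ) : KPlus (.and φ ψ) φ
  | andE₂ (φ ψ) : KPlus (.and φ ψ) ψ
  | andI {φ ψ χ} : KPlus φ ψ → KPlus φ χ → KPlus φ (.and ψ χ)
  | dist {φ ψ} (α) : KPlus φ ψ → KPlus (.dia α φ) (.dia α ψ)

/-- The Reflection Calculus `RC`. -/
inductive RC : SPF → SPF → Prop where
  | id (φ) : RC φ φ
  | topI (φ) : RC φ .top
  | cut {φ ψ χ} : RC φ ψ → RC ψ χ → RC φ χ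
  | andE₁ (φ ψ) : RC (.and φ ψ) φ
  | andE₂ (φ ψ) : RC (.and φ ψ) ψ
  | andI {φ ψ χ} : RC φ ψ → RC φ χ → RC φ (.and ψ χ)
  | dist {φ ψ} (α) : RC φ ψ → RC (.dia α φ) (.dia α ψ)
  | trans (α φ) : RC (.dia α (.dia α φ)) (.dia α φ)
  | mono {α β} (φ) : β < α → RC (.dia α φ) (.dia β φ)
  | jax {α β} (φ ψ) : β < α → RC (.and (.dia α φ) (.dia β ψ)) (.dia α (.and φ (.dia β ψ)))

/-- Modal depth. -/
def SPF.md : SPF → ℕ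
  | .top => 0
  | .var _ => 0
  | .dia _ φ => φ.md + 1
  | .and φ ψ => max φ.md ψ.md

/-- Modal trees. -/
inductive MTree : Type where
  | node : List ℕ → List (ℕ × MTree) → MTree

/-- Sum of modal trees. -/
def MTree.sum : MTree → MTree → MTree
  | .node Δ₁ Γ₁, .node Δ₂ Γ₂ => .node (Δ₁ ++ Δ₂) (Γ₁ ++ Γ₂)

mutual
/-- Height of a modal tree. -/
def MTree.height : MTree → ℕ
  | .node _ Γ => heightL Γ
def heightL : List (ℕ × MTree) → ℕ
  | [] => 0
  | (_, S) :: Γ => max (S.height + 1) (heightL Γ)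
end

mutual
/-- `T.IsPos k`: the (1-indexed) string `k` is a position of `T`. -/
def MTree.IsPos : MTree → List ℕ → Prop
  | _, [] => True
  | .node _ Γ, i :: k => isPosL Γ i k
def isPosL : List (ℕ × MTree) → ℕ → List ℕ → Prop
  | [], _, _ => False
  | _ :: _, 0, _ => False
  | (_, S) :: _, 1, k => S.IsPos k
  | _ :: Γ, n+2, k => isPosL Γ (n+1) k
end

mutual
/-- Subtree of `T` at position `k` (returning a default junk value off positions). -/
def MTree.subtree : MTree → List ℕ → MTree
  | T, [] => T
  | .node Δ Γ, i :: k => subtreeL (.node Δ Γ) Γ i k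
def subtreeL : MTree → List (ℕ × MTree) → ℕ → List ℕ → MTree
  | d, [], _, _ => d
  | d, _ :: _, 0, _ => d
  | _, (_, S) :: _, 1, k => S.subtree k
  | d, _ :: Γ, n+2, k => subtreeL d Γ (n+1) k
end

mutual
/-- `T.replace S k`: replace the subtree of `T` at position `k` by `S`. -/
def MTree.replace : MTree → MTree → List ℕ → MTree
  | _, S, [] => S
  | .node Δ Γ, S, i :: k => .node Δ (replaceL Γ S i k)
def replaceL : List (ℕ × MTree) → MTree → ℕ → List ℕ → List (ℕ × MTree)
  | [], _, _, _ => []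
  | Γ, _, 0, _ => Γ
  | (α, C) :: Γ, S, 1, k => (α, C.replace S k) :: Γ
  | x :: Γ, S, n+2, k => x :: replaceL Γ S (n+1) k
end

/-- Names of the eight rewriting rules of TRC. -/
inductive Rule : Type where
  | rhoP | rhoM | sigma | piP | piM | four | lam | jay
  deriving DecidableEq

/-- One rewriting step performed at the root. -/
inductive RootStep : Rule → MTree → MTree → Prop where
  | rhoP {Δ Γ i p} (hi : 1 ≤ i) (h : Δ[i-1]? = some p) :
      RootStep .rhoP (.node Δ Γ) (.node (p :: Δ) Γ)
  | rhoM {Δ Γ i} (hi : 1 ≤ i) (h : i - 1 < Δ.length) :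
      RootStep .rhoM (.node Δ Γ) (.node (Δ.eraseIdx (i-1)) Γ)
  | sigma {Δ Γ i j x y} (hi : 1 ≤ i) (hj : 1 ≤ j) (hij : i ≠ j)
      (hx : Γ[i-1]? = some x) (hy : Γ[j-1]? = some y) :
      RootStep .sigma (.node Δ Γ) (.node Δ ((Γ.set (j-1) x).set (i-1) y))
  | piP {Δ Γ i x} (hi : 1 ≤ i) (hx : Γ[i-1]? = some x) :
      RootStep .piP (.node Δ Γ) (.node Δ (x :: Γ))
  | piM {Δ Γ i} (hi : 1 ≤ i) (h : i - 1 < Γ.length) :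
      RootStep .piM (.node Δ Γ) (.node Δ (Γ.eraseIdx (i-1)))
  | four {Δ Γ i j β Δt Γt S} (hi : 1 ≤ i) (hj : 1 ≤ j)
      (hΓ : Γ[i-1]? = some (β, MTree.node Δt Γt)) (hΓt : Γt[j-1]? = some (β, S)) :
      RootStep .four (.node Δ Γ) (.node Δ (Γ.set (i-1) (β, S)))
  | lam {Δ Γ i α β S} (hi : 1 ≤ i) (hβ : β < α) (hΓ : Γ[i-1]? = some (α, S)) :
      RootStep .lam (.node Δ Γ) (.node Δ (Γ.set (i-1) (β, S)))
  | jay {Δ Γ i j α β Δt Γt S} (hi : 1 ≤ i) (hj : 1 ≤ j) (hij : i ≠ j) (hβ : β < α)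
      (hΓi : Γ[i-1]? = some (α, MTree.node Δt Γt)) (hΓj : Γ[j-1]? = some (β, S)) :
      RootStep .jay (.node Δ Γ)
        (.node Δ ((Γ.set (i-1) (α, MTree.node Δt (Γt ++ [(β, S)]))).eraseIdx (j-1)))

/-- One step of the rule `r`, applied at some position. -/
def StepR (r : Rule) (T T' : MTree) : Prop :=
  ∃ k S, T.IsPos k ∧ RootStep r (T.subtree k) S ∧ T' = T.replace S k

/-- One step of the rewriting relation `↪`. -/
def Step (T T' : MTree) : Prop := ∃ r, StepR r T T'

/-- The rewriting relation `↪*`. -/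
def Steps : MTree → MTree → Prop := Relation.ReflTransGen Step

/-- TRC-equivalence `↔*`. -/
def TEquiv (T T' : MTree) : Prop := Steps T T' ∧ Steps T' T

/-- `T ↪^Ω S` : rewriting applying the rules of `Ω` in order, one step each. -/
inductive StepsOf : List Rule → MTree → MTree → Prop where
  | nil (T) : StepsOf [] T T
  | cons {r Ω T U S} : StepR r T U → StepsOf Ω U S → StepsOf (r :: Ω) T S

def AtomicStep (T S : MTree) : Prop := StepR .rhoP T S ∨ StepR .rhoM T S
def DecreasingStep (T S : MTree) : Prop := StepR .piM T S ∨ StepR .four T S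
def ModalStep (T S : MTree) : Prop := StepR .lam T S ∨ StepR .jay T S

/-- Finite conjunctions (empty conjunction is `⊤`). -/
def bigAnd : List SPF → SPF
  | [] => .top
  | φ :: l => .and φ (bigAnd l)

mutual
/-- The embedding `ℱ` of modal trees into formulas. -/
def MTree.toFormula : MTree → SPF
  | .node Δ Γ => .and (bigAnd (Δ.map SPF.var)) (diamL Γ)
def diamL : List (ℕ × MTree) → SPF
  | [] => .top
  | (α, S) :: Γ => .and (.dia α S.toFormula) (diamL Γ)
end

/-- The embedding `𝒯` of formulas into modal trees. -/
def SPF.toTree : SPF → MTree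
  | .top => .node [] []
  | .var p => .node [p] []
  | .dia α φ => .node [] [(α, φ.toTree)]
  | .and φ ψ => φ.toTree.sum ψ.toTree

/-- Nonempty conjunction `φ₁ ∧ (φ₂ ∧ (… ∧ φₙ))`. -/
def conjNE : SPF → List SPF → SPF
  | φ, [] => φ
  | φ, ψ :: l => .and φ (conjNE ψ l)

end TRC
namespace TRC

open Relation (ReflTransGen)

/-! ### List helper lemmas -/

theorem lt_of_g {X : Type*} {l : List X} {n : ℕ} {a : X} (h : l[n]? = some a) :
    n < l.length := by
  by_contra hc
  rw [List.getElem?_eq_none (by omega)] at h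
  exact absurd h (by simp)

theorem g_set_self {X : Type*} {l : List X} {n : ℕ} {a : X} (h : n < l.length) :
    (l.set n a)[n]? = some a := by
  simp [List.getElem?_set, h]

theorem g_set_ne {X : Type*} {l : List X} {n m : ℕ} {a : X} (h : n ≠ m) :
    (l.set n a)[m]? = l[m]? := by
  simp [List.getElem?_set, h]

theorem set_g {X : Type*} {l : List X} {n : ℕ} {a : X} (h : l[n]? = some a) :
    l.set n a = l := by
  have hn : n < l.length := lt_of_g h
  apply List.ext_getElem?
  intro m
  rw [List.getElem?_set]
  split
  · next heq => subst heq; simp [hn, h.symm]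
  · rfl

theorem eraseIdx_set {X : Type*} (L : List X) (e q : ℕ) (v : X) :
    (L.eraseIdx e).set q v = (L.set (if q < e then q else q + 1) v).eraseIdx e := by
  induction L generalizing e q with
  | nil => simp
  | cons a L ih =>
    cases e with
    | zero => simp
    | succ e =>
      cases q with
      | zero => simp
      | succ q =>
        have : (q + 1 < e + 1) = (q < e) := by simp
        simp only [List.eraseIdx_cons_succ, List.set_cons_succ, this]
        by_cases h : q < e
        · simp only [if_pos h, List.set_cons_succ, List.eraseIdx_cons_succ, List.cons.injEq,
            true_and]
          rw [ih, if_pos h]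
        · simp only [if_neg h, List.set_cons_succ, List.eraseIdx_cons_succ, List.cons.injEq,
            true_and]
          rw [ih, if_neg h]

theorem eraseIdx_set_self {X : Type*} (L : List X) (e : ℕ) (a : X) :
    (L.set e a).eraseIdx e = L.eraseIdx e := by
  induction L generalizing e with
  | nil => simp
  | cons x L ih =>
    cases e with
    | zero => simp
    | succ e => simp [ih]

/-! ### Position / subtree / replace characterizations -/

theorem isPosL_elim {Γ : List (ℕ × MTree)} {i : ℕ} {k : List ℕ} (h : isPosL Γ i k) :
    ∃ n α C, i = n + 1 ∧ Γ[n]? = some (α, C) ∧ MTree.IsPos C k := by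
  induction Γ generalizing i with
  | nil => simp [isPosL] at h
  | cons x Γ ih =>
    obtain ⟨α, C⟩ := x
    match i with
    | 0 => simp [isPosL] at h
    | 1 =>
      simp only [isPosL] at h
      exact ⟨0, α, C, rfl, by simp, h⟩
    | n + 2 =>
      simp only [isPosL] at h
      obtain ⟨m, α', C', hm, hg, hp⟩ := ih h
      obtain rfl : n = m := by omega
      exact ⟨n + 1, α', C', rfl, by simpa using hg, hp⟩

theorem isPosL_intro {Γ : List (ℕ × MTree)} {n : ℕ} {α : ℕ} {C : MTree} {k : List ℕ}
    (hg : Γ[n]? = some (α, C)) (h : C.IsPos k) : isPosL Γ (n + 1) k := by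
  induction Γ generalizing n with
  | nil => simp at hg
  | cons x Γ ih =>
    obtain ⟨α', C'⟩ := x
    cases n with
    | zero =>
      simp only [List.getElem?_cons_zero, Option.some.injEq, Prod.mk.injEq] at hg
      obtain ⟨rfl, rfl⟩ := hg
      simpa [isPosL] using h
    | succ n =>
      simp only [List.getElem?_cons_succ] at hg
      simpa [isPosL] using ih hg

theorem subtreeL_eq {Γ : List (ℕ × MTree)} {n : ℕ} {α : ℕ} {C : MTree}
    (hg : Γ[n]? = some (α, C)) (d : MTree) (k : List ℕ) :
    subtreeL d Γ (n + 1) k = C.subtree k := by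
  induction Γ generalizing n with
  | nil => simp at hg
  | cons x Γ ih =>
    obtain ⟨α', C'⟩ := x
    cases n with
    | zero =>
      simp only [List.getElem?_cons_zero, Option.some.injEq, Prod.mk.injEq] at hg
      obtain ⟨rfl, rfl⟩ := hg
      simp [subtreeL]
    | succ n =>
      simp only [List.getElem?_cons_succ] at hg
      simpa [subtreeL] using ih hg

theorem replaceL_eq {Γ : List (ℕ × MTree)} {n : ℕ} {α : ℕ} {C : MTree}
    (hg : Γ[n]? = some (α, C)) (S : MTree) (k : List ℕ) :
    replaceL Γ S (n + 1) k = Γ.set n (α, C.replace S k) := by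
  induction Γ generalizing n with
  | nil => simp [replaceL]
  | cons x Γ ih =>
    obtain ⟨α', C'⟩ := x
    cases n with
    | zero =>
      simp only [List.getElem?_cons_zero, Option.some.injEq, Prod.mk.injEq] at hg
      obtain ⟨rfl, rfl⟩ := hg
      simp [replaceL]
    | succ n =>
      simp only [List.getElem?_cons_succ] at hg
      simp [replaceL, ih hg]

/-! ### Step lemmas -/

theorem stepR_root {r : Rule} {T S : MTree} (h : RootStep r T S) : StepR r T S :=
  ⟨[], S, by simp [MTree.IsPos], by simpa [MTree.subtree] using h, by simp [MTree.replace]⟩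

theorem stepR_child {r : Rule} {Δ : List ℕ} {Γ : List (ℕ × MTree)} {n : ℕ} {α : ℕ}
    {C C' : MTree} (hg : Γ[n]? = some (α, C)) (h : StepR r C C') :
    StepR r (.node Δ Γ) (.node Δ (Γ.set n (α, C'))) := by
  obtain ⟨k, S, hp, hr, rfl⟩ := h
  refine ⟨(n + 1) :: k, S, ?_, ?_, ?_⟩
  · simp only [MTree.IsPos]
    exact isPosL_intro hg hp
  · simpa [MTree.subtree, subtreeL_eq hg] using hr
  · simp [MTree.replace, replaceL_eq hg]

theorem rt_child {r : Rule} {Δ : List ℕ} {Γ : List (ℕ × MTree)} {n : ℕ} {α : ℕ}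
    {C C' : MTree} (hg : Γ[n]? = some (α, C)) (h : ReflTransGen (StepR r) C C') :
    ReflTransGen (StepR r) (.node Δ Γ) (.node Δ (Γ.set n (α, C'))) := by
  have hn : n < Γ.length := lt_of_g hg
  induction h with
  | refl => rw [set_g hg]
  | tail _ hstep ih =>
    refine ih.tail ?_
    next b c _ =>
    have : (Γ.set n (α, b))[n]? = some (α, b) := g_set_self (by simpa using hn)
    have h2 := stepR_child (Δ := Δ) this hstep
    rwa [List.set_set] at h2

/-! ### Sigma rotation -/

theorem sigma_rot (Δ : List ℕ) (P L : List (ℕ × MTree)) (x : ℕ × MTree) :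
    ReflTransGen (StepR .sigma)
      (.node Δ (P ++ (L ++ [x]))) (.node Δ (P ++ (x :: L))) := by
  induction L generalizing P x with
  | nil => exact .refl
  | cons y L ih =>
    have hy : (P ++ (y :: (L ++ [x])))[P.length]? = some y := by
      rw [List.getElem?_append_right le_rfl]
      simp
    have hx : (P ++ (y :: (L ++ [x])))[P.length + L.length + 1]? = some x := by
      rw [List.getElem?_append_right (by omega)]
      have : P.length + L.length + 1 - P.length = L.length + 1 := by omega
      rw [this]
      simp only [List.getElem?_cons_succ]
      rw [List.getElem?_append_right le_rfl]
      simp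
    have step : StepR .sigma (.node Δ (P ++ (y :: (L ++ [x]))))
        (.node Δ (P ++ (x :: (L ++ [y])))) := by
      have h := stepR_root (RootStep.sigma (Δ := Δ) (i := P.length + 1)
        (j := P.length + L.length + 2) (by omega) (by omega) (by omega)
        hy hx)
      have e1 : (P ++ (y :: (L ++ [x]))).set (P.length + L.length + 1) y
          = P ++ (y :: (L ++ [y])) := by
        rw [List.set_append_right _ _ (by omega)]
        congr 1
        have : P.length + L.length + 1 - P.length = L.length + 1 := by omega
        rw [this]
        simp only [List.set_cons_succ]
        rw [List.set_append_right _ _ le_rfl]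
        simp
      have e2 : (P ++ (y :: (L ++ [y]))).set P.length x = P ++ (x :: (L ++ [y])) := by
        rw [List.set_append_right _ _ le_rfl]
        simp
      simpa only [show P.length + L.length + 2 - 1 = P.length + L.length + 1 from rfl,
        show P.length + 1 - 1 = P.length from rfl, e1, e2] using h
    have ih' := ih (P ++ [x]) y
    simp only [List.append_assoc, List.singleton_append] at ih'
    exact ReflTransGen.head step ih'

end TRC
namespace TRC
open Relation (ReflTransGen)

theorem key_lam_root {Δ : List ℕ} {Γ : List (ℕ × MTree)} {n α β : ℕ} {C S₂ : MTree}
    (hβ : β < α) (hΓ : Γ[n]? = some (α, C)) (k₂ : List ℕ)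
    (hpos2 : (MTree.node Δ (Γ.set n (β, C))).IsPos k₂)
    (hr2 : RootStep .piP ((MTree.node Δ (Γ.set n (β, C))).subtree k₂) S₂) :
    ∃ U V, ReflTransGen (StepR .piP) (MTree.node Δ Γ) U ∧
      ReflTransGen (StepR .lam) U V ∧
      ReflTransGen (StepR .sigma) V ((MTree.node Δ (Γ.set n (β, C))).replace S₂ k₂) := by
  have hn : n < Γ.length := lt_of_g hΓ
  cases k₂ with
  | nil =>
    simp only [MTree.subtree] at hr2
    simp only [MTree.replace]
    cases hr2 with
    | piP hi hx =>
      rename_i i x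
      obtain ⟨p, rfl⟩ : ∃ p, i = p + 1 := ⟨i - 1, by omega⟩
      simp only [Nat.add_sub_cancel] at hx
      by_cases hq : p = n
      · subst hq
        rw [g_set_self (by simpa using hn)] at hx
        obtain rfl : (β, C) = x := Option.some.inj hx
        have step1 : StepR .piP (MTree.node Δ Γ) (MTree.node Δ ((α, C) :: Γ)) :=
          stepR_root (RootStep.piP (i := p + 1) (by omega) hΓ)
        have step2 : StepR .lam (MTree.node Δ ((α, C) :: Γ))
            (MTree.node Δ ((β, C) :: Γ)) := by
          have := stepR_root (RootStep.lam (Δ := Δ) (Γ := (α, C) :: Γ) (i := 1)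
            (α := α) (β := β) (S := C) (by omega) hβ (by simp))
          simpa using this
        have step3 : StepR .lam (MTree.node Δ ((β, C) :: Γ))
            (MTree.node Δ ((β, C) :: Γ.set p (β, C))) := by
          have := stepR_root (RootStep.lam (Δ := Δ) (Γ := (β, C) :: Γ) (i := p + 2)
            (by omega) hβ (by simpa using hΓ))
          simpa using this
        exact ⟨_, _, .single step1, (ReflTransGen.single step2).tail step3, .refl⟩
      · rw [g_set_ne (Ne.symm (by omega))] at hx
        have step1 : StepR .piP (MTree.node Δ Γ) (MTree.node Δ (x :: Γ)) :=
          stepR_root (RootStep.piP (i := p + 1) (by omega) hx)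
        have step2 : StepR .lam (MTree.node Δ (x :: Γ))
            (MTree.node Δ (x :: Γ.set n (β, C))) := by
          have := stepR_root (RootStep.lam (Δ := Δ) (Γ := x :: Γ) (i := n + 2)
            (by omega) hβ (by simpa using hΓ))
          simpa using this
        exact ⟨_, _, .single step1, .single step2, .refl⟩
  | cons m t =>
    simp only [MTree.IsPos] at hpos2
    obtain ⟨q, γ, D, rfl, hgD, hpD⟩ := isPosL_elim hpos2
    simp only [MTree.subtree] at hr2
    rw [subtreeL_eq hgD] at hr2
    simp only [MTree.replace]
    rw [replaceL_eq hgD]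
    by_cases hq : q = n
    · subst hq
      rw [g_set_self (by simpa using hn)] at hgD
      have hinj := Option.some.inj hgD
      have hγ : γ = β := (congrArg Prod.fst hinj).symm
      have hD : D = C := (congrArg Prod.snd hinj).symm
      rw [hD] at hpD hr2
      rw [hγ, hD]
      have step1 : StepR .piP (MTree.node Δ Γ)
          (MTree.node Δ (Γ.set q (α, C.replace S₂ t))) :=
        stepR_child hΓ ⟨t, S₂, hpD, hr2, rfl⟩
      have step2 : StepR .lam (MTree.node Δ (Γ.set q (α, C.replace S₂ t)))
          (MTree.node Δ ((Γ.set q (α, C.replace S₂ t)).set q (β, C.replace S₂ t))) :=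
        stepR_root (RootStep.lam (i := q + 1) (by omega) hβ
          (g_set_self (by simpa using hn)))
      refine ⟨_, _, .single step1, .single step2, ?_⟩
      rw [List.set_set, List.set_set]
    · rw [g_set_ne (Ne.symm hq)] at hgD
      have step1 : StepR .piP (MTree.node Δ Γ)
          (MTree.node Δ (Γ.set q (γ, D.replace S₂ t))) :=
        stepR_child hgD ⟨t, S₂, hpD, hr2, rfl⟩
      have step2 : StepR .lam (MTree.node Δ (Γ.set q (γ, D.replace S₂ t)))
          (MTree.node Δ ((Γ.set q (γ, D.replace S₂ t)).set n (β, C))) :=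
        stepR_root (RootStep.lam (i := n + 1) (by omega) hβ
          (by simp only [Nat.add_sub_cancel]; rw [g_set_ne hq]; exact hΓ))
      refine ⟨_, _, .single step1, .single step2, ?_⟩
      rw [List.set_comm _ _ hq]
end TRC
namespace TRC
open Relation (ReflTransGen)

theorem key_jay_root {Δ : List ℕ} {Γ : List (ℕ × MTree)} {n e α β : ℕ} {Δt : List ℕ}
    {Γt : List (ℕ × MTree)} {Sj S₂ : MTree} (hne : n ≠ e) (hβ : β < α)
    (hΓi : Γ[n]? = some (α, .node Δt Γt)) (hΓj : Γ[e]? = some (β, Sj)) (k₂ : List ℕ)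
    (hpos2 : (MTree.node Δ ((Γ.set n (α, .node Δt (Γt ++ [(β, Sj)]))).eraseIdx e)).IsPos k₂)
    (hr2 : RootStep .piP
      ((MTree.node Δ ((Γ.set n (α, .node Δt (Γt ++ [(β, Sj)]))).eraseIdx e)).subtree k₂) S₂) :
    ∃ U V, ReflTransGen (StepR .piP) (MTree.node Δ Γ) U ∧
      ReflTransGen (StepR .jay) U V ∧
      ReflTransGen (StepR .sigma) V
        ((MTree.node Δ ((Γ.set n (α, .node Δt (Γt ++ [(β, Sj)]))).eraseIdx e)).replace S₂ k₂) := by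
  set N : MTree := .node Δt (Γt ++ [(β, Sj)]) with hN
  set xj : ℕ × MTree := (β, Sj) with hxj
  have hn : n < Γ.length := lt_of_g hΓi
  have he : e < Γ.length := lt_of_g hΓj
  cases k₂ with
  | nil =>
    simp only [MTree.subtree] at hr2
    simp only [MTree.replace]
    cases hr2 with
    | piP hi hx =>
      rename_i i x
      obtain ⟨p, rfl⟩ : ∃ p, i = p + 1 := ⟨i - 1, by omega⟩
      simp only [Nat.add_sub_cancel, List.getElem?_eraseIdx] at hx
      have hx' : (Γ.set n (α, N))[if p < e then p else p + 1]? = some x := by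
        by_cases hpe : p < e <;> simp only [hpe, if_true, if_false] at hx ⊢ <;> exact hx
      set q' := if p < e then p else p + 1 with hq'def
      have hq'e : q' ≠ e := by rw [hq'def]; split <;> omega
      by_cases hq : q' = n
      · -- duplicated element is the J-modified child
        rw [hq, g_set_self (by simpa using hn)] at hx'
        obtain rfl : (α, N) = x := Option.some.inj hx'
        have s1 : StepR .piP (MTree.node Δ Γ) (MTree.node Δ (xj :: Γ)) :=
          stepR_root (RootStep.piP (i := e + 1) (by omega) hΓj)
        have s2 : StepR .piP (MTree.node Δ (xj :: Γ))
            (MTree.node Δ ((α, MTree.node Δt Γt) :: xj :: Γ)) :=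
          stepR_root (RootStep.piP (i := n + 2) (by omega) (by simpa using hΓi))
        have s3 : StepR .jay (MTree.node Δ ((α, MTree.node Δt Γt) :: xj :: Γ))
            (MTree.node Δ ((α, N) :: Γ)) := by
          have := stepR_root (RootStep.jay (Δ := Δ)
            (Γ := (α, MTree.node Δt Γt) :: xj :: Γ) (i := 1) (j := 2)
            (Δt := Δt) (Γt := Γt) (S := Sj) (α := α) (β := β)
            (by omega) (by omega) (by omega) hβ (by simp) (by simp [hxj]))
          simpa using this
        have s4 : StepR .jay (MTree.node Δ ((α, N) :: Γ))
            (MTree.node Δ ((α, N) :: (Γ.set n (α, N)).eraseIdx e)) := by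
          have := stepR_root (RootStep.jay (Δ := Δ) (Γ := (α, N) :: Γ)
            (i := n + 2) (j := e + 2) (by omega) (by omega) (by omega) hβ
            (by simpa using hΓi) (by simpa [hxj] using hΓj))
          simpa [hN] using this
        exact ⟨_, _, (ReflTransGen.single s1).tail s2,
          (ReflTransGen.single s3).tail s4, .refl⟩
      · rw [g_set_ne (Ne.symm hq)] at hx'
        have s1 : StepR .piP (MTree.node Δ Γ) (MTree.node Δ (x :: Γ)) :=
          stepR_root (RootStep.piP (i := q' + 1) (by omega) hx')
        have s2 : StepR .jay (MTree.node Δ (x :: Γ))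
            (MTree.node Δ (x :: (Γ.set n (α, N)).eraseIdx e)) := by
          have := stepR_root (RootStep.jay (Δ := Δ) (Γ := x :: Γ)
            (i := n + 2) (j := e + 2) (by omega) (by omega) (by omega) hβ
            (by simpa using hΓi) (by simpa [hxj] using hΓj))
          simpa [hN] using this
        exact ⟨_, _, .single s1, .single s2, .refl⟩
  | cons m t =>
    simp only [MTree.IsPos] at hpos2
    obtain ⟨q, γ, D, rfl, hgD, hpD⟩ := isPosL_elim hpos2
    simp only [MTree.subtree] at hr2
    rw [subtreeL_eq hgD] at hr2
    simp only [MTree.replace]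
    rw [replaceL_eq hgD]
    rw [List.getElem?_eraseIdx] at hgD
    have hx' : (Γ.set n (α, N))[if q < e then q else q + 1]? = some (γ, D) := by
      by_cases hqe : q < e <;> simp only [hqe, if_true, if_false] at hgD ⊢ <;> exact hgD
    set q' := if q < e then q else q + 1 with hq'def
    have hq'e : q' ≠ e := by rw [hq'def]; split <;> omega
    have hset : ∀ v, (((Γ.set n (α, N)).eraseIdx e).set q v)
        = ((Γ.set n (α, N)).set q' v).eraseIdx e := by
      intro v; rw [eraseIdx_set, ← hq'def]
    by_cases hq : q' = n
    · -- pi-plus inside the J-modified child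
      rw [hq, g_set_self (by simpa using hn)] at hx'
      have hinj := Option.some.inj hx'
      have hγ : γ = α := (congrArg Prod.fst hinj).symm
      have hD : D = N := (congrArg Prod.snd hinj).symm
      rw [hD] at hpD hr2
      rw [hγ, hD]
      have hset' : ∀ v, (((Γ.set n (α, N)).eraseIdx e).set q (α, v))
          = (Γ.set n (α, v)).eraseIdx e := by
        intro v; rw [hset, hq, List.set_set]
      rw [hN] at hpD hr2
      cases t with
      | nil =>
        simp only [MTree.subtree] at hr2
        simp only [MTree.replace]
        cases hr2 with
        | piP hi hy =>
          rename_i i y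
          obtain ⟨w, rfl⟩ : ∃ w, i = w + 1 := ⟨i - 1, by omega⟩
          simp only [Nat.add_sub_cancel] at hy
          have hwlt : w < Γt.length + 1 := by simpa using lt_of_g hy
          by_cases hw : w < Γt.length
          · -- duplicate an original element of Γt
            have hyt : Γt[w]? = some y := by
              rw [List.getElem?_append_left hw] at hy; exact hy
            have s1 : StepR .piP (MTree.node Δ Γ)
                (MTree.node Δ (Γ.set n (α, MTree.node Δt (y :: Γt)))) :=
              stepR_child hΓi (stepR_root (RootStep.piP (i := w + 1) (by omega) hyt))
            have s2 : StepR .jay (MTree.node Δ (Γ.set n (α, MTree.node Δt (y :: Γt))))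
                (MTree.node Δ ((Γ.set n (α, MTree.node Δt (y :: (Γt ++ [xj])))).eraseIdx e)) := by
              have := stepR_root (RootStep.jay (Δ := Δ)
                (Γ := Γ.set n (α, MTree.node Δt (y :: Γt)))
                (i := n + 1) (j := e + 1) (by omega) (by omega) (by omega) hβ
                (g_set_self (by simpa using hn))
                (by rw [Nat.add_sub_cancel, g_set_ne hne]; exact hΓj))
              simpa [List.set_set] using this
            refine ⟨_, _, .single s1, .single s2, ?_⟩
            rw [hset' (MTree.node Δt (y :: (Γt ++ [xj])))]
          · -- duplicate the appended element: needs sigma rotation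
            obtain rfl : w = Γt.length := by omega
            have hyx : y = xj := by
              rw [List.getElem?_append_right le_rfl] at hy
              simpa using hy.symm
            subst hyx
            have s1 : StepR .piP (MTree.node Δ Γ) (MTree.node Δ (xj :: Γ)) :=
              stepR_root (RootStep.piP (i := e + 1) (by omega) hΓj)
            have s2 : StepR .jay (MTree.node Δ (xj :: Γ))
                (MTree.node Δ (Γ.set n (α, N))) := by
              have := stepR_root (RootStep.jay (Δ := Δ) (Γ := xj :: Γ)
                (i := n + 2) (j := 1) (Δt := Δt) (Γt := Γt) (S := Sj) (α := α) (β := β)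
                (by omega) (by omega) (by omega) hβ
                (by simpa using hΓi) (by simp [hxj]))
              simpa [hN] using this
            have s3 : StepR .jay (MTree.node Δ (Γ.set n (α, N)))
                (MTree.node Δ ((Γ.set n (α, MTree.node Δt ((Γt ++ [xj]) ++ [xj]))).eraseIdx e)) := by
              have := stepR_root (RootStep.jay (Δ := Δ) (Γ := Γ.set n (α, N))
                (i := n + 1) (j := e + 1) (by omega) (by omega) (by omega) hβ
                (by rw [Nat.add_sub_cancel]; exact g_set_self (by simpa using hn))
                (by rw [Nat.add_sub_cancel, g_set_ne hne]; exact hΓj))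
              simpa [hN, List.set_set] using this
            have hg3 : ((Γ.set n (α, MTree.node Δt ((Γt ++ [xj]) ++ [xj]))).eraseIdx e)[q]?
                = some (α, MTree.node Δt ((Γt ++ [xj]) ++ [xj])) := by
              have h' : (Γ.set n (α, MTree.node Δt ((Γt ++ [xj]) ++ [xj])))[q']?
                  = some (α, MTree.node Δt ((Γt ++ [xj]) ++ [xj])) := by
                rw [hq]; exact g_set_self (by simpa using hn)
              rw [List.getElem?_eraseIdx]
              by_cases hqe : q < e
              · rw [if_pos hqe]; rw [hq'def, if_pos hqe] at h'; exact h'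
              · rw [if_neg hqe]; rw [hq'def, if_neg hqe] at h'; exact h'
            have hrot : ReflTransGen (StepR .sigma)
                (MTree.node Δt ((Γt ++ [xj]) ++ [xj])) (MTree.node Δt (xj :: (Γt ++ [xj]))) := by
              have := sigma_rot Δt [] (Γt ++ [xj]) xj
              simpa using this
            have hσ := rt_child (Δ := Δ) hg3 hrot
            refine ⟨_, _, .single s1, (ReflTransGen.single s2).tail s3, ?_⟩
            have e1 : (((Γ.set n (α, MTree.node Δt ((Γt ++ [xj]) ++ [xj]))).eraseIdx e).set q
                (α, MTree.node Δt (xj :: (Γt ++ [xj]))))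
                = ((Γ.set n (α, N)).eraseIdx e).set q (α, MTree.node Δt (xj :: (Γt ++ [xj]))) := by
              rw [hset', eraseIdx_set, ← hq'def, hq, List.set_set]
            rw [← e1]
            exact hσ
      | cons m' t' =>
        simp only [MTree.subtree] at hr2
        simp only [MTree.IsPos] at hpD
        obtain ⟨w, γ₂, E, rfl, hgE, hpE⟩ := isPosL_elim hpD
        rw [subtreeL_eq hgE] at hr2
        rw [show N.replace S₂ ((w + 1) :: t') = MTree.node Δt (replaceL (Γt ++ [xj]) S₂ (w + 1) t') from by simp only [hN, MTree.replace]]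
        rw [replaceL_eq hgE]
        have hwlt : w < Γt.length + 1 := by simpa using lt_of_g hgE
        by_cases hw : w < Γt.length
        · have hgt : Γt[w]? = some (γ₂, E) := by
            rw [List.getElem?_append_left hw] at hgE; exact hgE
          have s1 : StepR .piP (MTree.node Δ Γ)
              (MTree.node Δ (Γ.set n (α, MTree.node Δt (Γt.set w (γ₂, E.replace S₂ t'))))) :=
            stepR_child hΓi (stepR_child hgt ⟨t', S₂, hpE, hr2, rfl⟩)
          have s2 : StepR .jay
              (MTree.node Δ (Γ.set n (α, MTree.node Δt (Γt.set w (γ₂, E.replace S₂ t')))))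
              (MTree.node Δ ((Γ.set n
                (α, MTree.node Δt (Γt.set w (γ₂, E.replace S₂ t') ++ [xj]))).eraseIdx e)) := by
            have := stepR_root (RootStep.jay (Δ := Δ)
              (Γ := Γ.set n (α, MTree.node Δt (Γt.set w (γ₂, E.replace S₂ t'))))
              (i := n + 1) (j := e + 1) (by omega) (by omega) (by omega) hβ
              (by rw [Nat.add_sub_cancel]; exact g_set_self (by simpa using hn))
              (by rw [Nat.add_sub_cancel, g_set_ne hne]; exact hΓj))
            simpa [List.set_set] using this
          refine ⟨_, _, .single s1, .single s2, ?_⟩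
          rw [hset', List.set_append_left _ _ hw]
        · obtain rfl : w = Γt.length := by omega
          rw [List.getElem?_append_right le_rfl] at hgE
          simp only [Nat.sub_self, List.getElem?_cons_zero, Option.some.injEq, hxj,
            Prod.mk.injEq] at hgE
          obtain ⟨hγ₂, hEj⟩ := hgE
          rw [← hEj] at hpE hr2
          rw [← hγ₂, ← hEj]
          have s1 : StepR .piP (MTree.node Δ Γ)
              (MTree.node Δ (Γ.set e (β, Sj.replace S₂ t'))) :=
            stepR_child hΓj ⟨t', S₂, hpE, hr2, rfl⟩
          have s2 : StepR .jay (MTree.node Δ (Γ.set e (β, Sj.replace S₂ t')))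
              (MTree.node Δ (((Γ.set e (β, Sj.replace S₂ t')).set n
                (α, MTree.node Δt (Γt ++ [(β, Sj.replace S₂ t')]))).eraseIdx e)) := by
            have := stepR_root (RootStep.jay (Δ := Δ)
              (Γ := Γ.set e (β, Sj.replace S₂ t'))
              (i := n + 1) (j := e + 1) (by omega) (by omega) (by omega) hβ
              (by rw [Nat.add_sub_cancel, g_set_ne (Ne.symm hne)]; exact hΓi)
              (by rw [Nat.add_sub_cancel]; exact g_set_self (by simpa using he)))
            simpa using this
          refine ⟨_, _, .single s1, .single s2, ?_⟩
          have etarget : ((Γ.set e (β, Sj.replace S₂ t')).set n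
              (α, MTree.node Δt (Γt ++ [(β, Sj.replace S₂ t')]))).eraseIdx e
              = ((Γ.set n (α, N)).eraseIdx e).set q
                (α, MTree.node Δt ((Γt ++ [(β, Sj)]).set Γt.length (β, Sj.replace S₂ t'))) := by
            rw [hset']
            rw [List.set_comm _ _ (Ne.symm hne), eraseIdx_set_self]
            congr 3
            rw [List.set_append_right _ _ le_rfl]
            simp
          rw [etarget]
    · -- pi-plus at an unrelated child
      rw [g_set_ne (Ne.symm hq)] at hx'
      have s1 : StepR .piP (MTree.node Δ Γ)
          (MTree.node Δ (Γ.set q' (γ, D.replace S₂ t))) :=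
        stepR_child hx' ⟨t, S₂, hpD, hr2, rfl⟩
      have s2 : StepR .jay (MTree.node Δ (Γ.set q' (γ, D.replace S₂ t)))
          (MTree.node Δ (((Γ.set q' (γ, D.replace S₂ t)).set n (α, N)).eraseIdx e)) := by
        have := stepR_root (RootStep.jay (Δ := Δ) (Γ := Γ.set q' (γ, D.replace S₂ t))
          (i := n + 1) (j := e + 1) (by omega) (by omega) (by omega) hβ
          (by rw [Nat.add_sub_cancel, g_set_ne hq]; exact hΓi)
          (by rw [Nat.add_sub_cancel, g_set_ne hq'e]; exact hΓj))
        simpa [hN] using this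
      refine ⟨_, _, .single s1, .single s2, ?_⟩
      rw [hset, List.set_comm _ _ hq]
end TRC
namespace TRC
open Relation (ReflTransGen)

theorem key_root (θ : Rule) (hθ : θ = Rule.lam ∨ θ = Rule.jay) (Δ : List ℕ)
    (Γ : List (ℕ × MTree)) (k₂ : List ℕ) (S₁ S₂ : MTree)
    (hr1 : RootStep θ (MTree.node Δ Γ) S₁) (hp2 : S₁.IsPos k₂)
    (hr2 : RootStep .piP (S₁.subtree k₂) S₂) :
    ∃ U V, ReflTransGen (StepR .piP) (MTree.node Δ Γ) U ∧
      ReflTransGen (StepR θ) U V ∧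
      ReflTransGen (StepR .sigma) V (S₁.replace S₂ k₂) := by
  rcases hθ with rfl | rfl
  · cases hr1 with
    | lam hi hβ hΓ =>
      rename_i i α β C
      obtain ⟨n, rfl⟩ : ∃ n, i = n + 1 := ⟨i - 1, by omega⟩
      simp only [Nat.add_sub_cancel] at hΓ hp2 hr2 ⊢
      exact key_lam_root hβ hΓ k₂ hp2 hr2
  · cases hr1 with
    | jay hi hj hij hβ hΓi hΓj =>
      rename_i i j α β Δt Γt Sj
      obtain ⟨n, rfl⟩ : ∃ n, i = n + 1 := ⟨i - 1, by omega⟩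
      obtain ⟨e, rfl⟩ : ∃ e, j = e + 1 := ⟨j - 1, by omega⟩
      simp only [Nat.add_sub_cancel] at hΓi hΓj hp2 hr2 ⊢
      exact key_jay_root (by omega) hβ hΓi hΓj k₂ hp2 hr2

theorem key (θ : Rule) (hθ : θ = Rule.lam ∨ θ = Rule.jay) :
    ∀ (k₂ k₁ : List ℕ) (T S₁ S₂ : MTree), T.IsPos k₁ → RootStep θ (T.subtree k₁) S₁ →
      (T.replace S₁ k₁).IsPos k₂ → RootStep .piP ((T.replace S₁ k₁).subtree k₂) S₂ →
      ∃ U V, ReflTransGen (StepR .piP) T U ∧ ReflTransGen (StepR θ) U V ∧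
        ReflTransGen (StepR .sigma) V ((T.replace S₁ k₁).replace S₂ k₂) := by
  intro k₂
  induction k₂ with
  | nil =>
    intro k₁ T S₁ S₂ hp1 hr1 hp2 hr2
    obtain ⟨Δ, Γ⟩ := T
    cases k₁ with
    | nil =>
      simp only [MTree.subtree] at hr1
      simp only [MTree.replace] at hp2 hr2
      simpa [MTree.replace] using key_root θ hθ Δ Γ [] S₁ S₂ hr1 hp2 hr2
    | cons m₁ s =>
      simp only [MTree.IsPos] at hp1
      obtain ⟨n₀, α₀, C, rfl, hgC, hpC⟩ := isPosL_elim hp1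
      have hn₀ : n₀ < Γ.length := lt_of_g hgC
      simp only [MTree.subtree] at hr1
      rw [subtreeL_eq hgC] at hr1
      simp only [MTree.replace] at hp2 hr2 ⊢
      rw [replaceL_eq hgC] at hp2 hr2
      simp only [MTree.subtree] at hr2
      have θstep : StepR θ C (C.replace S₁ s) := ⟨s, S₁, hpC, hr1, rfl⟩
      cases hr2 with
      | piP hi hx =>
        rename_i i x
        obtain ⟨p, rfl⟩ : ∃ p, i = p + 1 := ⟨i - 1, by omega⟩
        simp only [Nat.add_sub_cancel] at hx
        by_cases hp : p = n₀
        · subst hp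
          rw [g_set_self (by simpa using hn₀)] at hx
          obtain rfl : (α₀, C.replace S₁ s) = x := Option.some.inj hx
          have s1 : StepR .piP (MTree.node Δ Γ) (MTree.node Δ ((α₀, C) :: Γ)) :=
            stepR_root (RootStep.piP (i := p + 1) (by omega) hgC)
          have s2 : StepR θ (MTree.node Δ ((α₀, C) :: Γ))
              (MTree.node Δ ((α₀, C.replace S₁ s) :: Γ)) := by
            have := stepR_child (Δ := Δ) (Γ := (α₀, C) :: Γ) (n := 0) (α := α₀)
              (by simp) θstep
            simpa using this
          have s3 : StepR θ (MTree.node Δ ((α₀, C.replace S₁ s) :: Γ))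
              (MTree.node Δ ((α₀, C.replace S₁ s) :: Γ.set p (α₀, C.replace S₁ s))) := by
            have := stepR_child (Δ := Δ) (Γ := (α₀, C.replace S₁ s) :: Γ) (n := p + 1)
              (by simpa using hgC) θstep
            simpa using this
          exact ⟨_, _, .single s1, (ReflTransGen.single s2).tail s3, .refl⟩
        · rw [g_set_ne (Ne.symm hp)] at hx
          have s1 : StepR .piP (MTree.node Δ Γ) (MTree.node Δ (x :: Γ)) :=
            stepR_root (RootStep.piP (i := p + 1) (by omega) hx)
          have s2 : StepR θ (MTree.node Δ (x :: Γ))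
              (MTree.node Δ (x :: Γ.set n₀ (α₀, C.replace S₁ s))) := by
            have := stepR_child (Δ := Δ) (Γ := x :: Γ) (n := n₀ + 1)
              (by simpa using hgC) θstep
            simpa using this
          exact ⟨_, _, .single s1, .single s2, .refl⟩
  | cons m t ih =>
    intro k₁ T S₁ S₂ hp1 hr1 hp2 hr2
    obtain ⟨Δ, Γ⟩ := T
    cases k₁ with
    | nil =>
      simp only [MTree.subtree] at hr1
      simp only [MTree.replace] at hp2 hr2 ⊢
      exact key_root θ hθ Δ Γ (m :: t) S₁ S₂ hr1 hp2 hr2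
    | cons m₁ s =>
      simp only [MTree.IsPos] at hp1
      obtain ⟨n₀, α₀, C, rfl, hgC, hpC⟩ := isPosL_elim hp1
      have hn₀ : n₀ < Γ.length := lt_of_g hgC
      simp only [MTree.subtree] at hr1
      rw [subtreeL_eq hgC] at hr1
      simp only [MTree.replace] at hp2 hr2 ⊢
      rw [replaceL_eq hgC] at hp2 hr2 ⊢
      simp only [MTree.IsPos] at hp2
      obtain ⟨q, γ, D, rfl, hgD, hpD⟩ := isPosL_elim hp2
      simp only [MTree.subtree] at hr2
      rw [subtreeL_eq hgD] at hr2
      rw [replaceL_eq hgD]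
      have θstep : StepR θ C (C.replace S₁ s) := ⟨s, S₁, hpC, hr1, rfl⟩
      by_cases hq : q = n₀
      · subst hq
        rw [g_set_self (by simpa using hn₀)] at hgD
        have hinj := Option.some.inj hgD
        have hγ : γ = α₀ := (congrArg Prod.fst hinj).symm
        have hD : D = C.replace S₁ s := (congrArg Prod.snd hinj).symm
        rw [hD] at hpD hr2
        rw [hγ, hD]
        obtain ⟨U₀, V₀, h1, h2, h3⟩ := ih s C S₁ S₂ hpC hr1 hpD hr2
        have l1 := rt_child (Δ := Δ) hgC h1
        have l2 := rt_child (Δ := Δ) (g_set_self (a := (α₀, U₀)) (by simpa using hn₀)) h2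
        rw [List.set_set] at l2
        have l3 := rt_child (Δ := Δ) (g_set_self (a := (α₀, V₀)) (by simpa using hn₀)) h3
        rw [List.set_set] at l3
        refine ⟨_, _, l1, l2, ?_⟩
        rw [List.set_set]
        exact l3
      · rw [g_set_ne (Ne.symm hq)] at hgD
        have s1 : StepR .piP (MTree.node Δ Γ)
            (MTree.node Δ (Γ.set q (γ, D.replace S₂ t))) :=
          stepR_child hgD ⟨t, S₂, hpD, hr2, rfl⟩
        have s2 : StepR θ (MTree.node Δ (Γ.set q (γ, D.replace S₂ t)))
            (MTree.node Δ ((Γ.set q (γ, D.replace S₂ t)).set n₀ (α₀, C.replace S₁ s))) :=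
          stepR_child (by rw [g_set_ne hq]; exact hgC) θstep
        refine ⟨_, _, .single s1, .single s2, ?_⟩
        rw [List.set_comm _ _ hq]
end TRC

/-- a modal step (`θ ∈ {λ, J}`) followed by a `π⁺`-step can be
replaced by finitely many `π⁺`-steps, then finitely many `θ`-steps, then
finitely many `σ`-steps. -/
theorem modal_piP_permutation (θ : TRC.Rule) (hθ : θ = TRC.Rule.lam ∨ θ = TRC.Rule.jay)
    (T S : TRC.MTree) (h : ∃ U, TRC.StepR θ T U ∧ TRC.StepR .piP U S) :
    ∃ U V, Relation.ReflTransGen (TRC.StepR .piP) T U ∧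
      Relation.ReflTransGen (TRC.StepR θ) U V ∧
      Relation.ReflTransGen (TRC.StepR .sigma) V S := by
  obtain ⟨W, h1, h2⟩ := h
  obtain ⟨k₁, S₁, hp1, hr1, rfl⟩ := h1
  obtain ⟨k₂, S₂, hp2, hr2, rfl⟩ := h2
  exact TRC.key θ hθ k₂ k₁ T S₁ S₂ hp1 hr1 hp2 hr2
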